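/- Let X be a Polish space, μ a Borel probability measure on X, and (T_N), T Borel maps X → X such that T_N(x) → T(x) for μ-a.e. x. Suppose the push-forward (T_N)_*μ has density f_N with respect to μ, the f_N are uniformly bounded in L^p(μ) for some p > 1, and f_N → f μ-a.e. Then T_*μ has density f with respect to μ; in particular, if f > 0 μ-a.e. then T_*μ and μ are mutually absolutely continuous. -/

import Mathlib

open MeasureTheory Filter
open scoped ENNReal NNReal

-- Auxiliary: uniform L^p bound (p>1) gives uniform integrability in L^1.
lemma aux_unifIntegrable {X : Type*} [MeasurableSpace X]
    (μ : Measure X) (p : ℝ) (hp : 1 < p)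
    (f : ℕ → X → ℝ) (hfm : ∀ N, Measurable (f N))
    (M : ℝ≥0∞) (hM : M ≠ ⊤)
    (hbound : ∀ N, eLpNorm (f N) (ENNReal.ofReal p) μ ≤ M) :
    UnifIntegrable f 1 μ := by
  have hppos : (0:ℝ) < p := lt_trans one_pos hp
  refine unifIntegrable_of' le_rfl ENNReal.one_ne_top
    (fun N => (hfm N).stronglyMeasurable) ?_
  intro ε hε
  set e : ℝ≥0∞ := ENNReal.ofReal ε with he
  have he0 : e ≠ 0 := by simp [he, hε]
  have hetop : e ≠ ⊤ := ENNReal.ofReal_ne_top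
  have hMp : M ^ p ≠ ⊤ := ENNReal.rpow_ne_top_of_nonneg hppos.le hM
  set K : ℝ≥0∞ := (M ^ p / e) ^ (p - 1)⁻¹ with hK
  have hKtop : K ≠ ⊤ := by
    apply ENNReal.rpow_ne_top_of_nonneg (inv_nonneg.2 (by linarith))
    exact (ENNReal.div_lt_top hMp he0).ne
  set C : ℝ≥0 := K.toNNReal + 1 with hC
  have hCpos : 0 < C := lt_of_lt_of_le zero_lt_one le_add_self
  have hCge : K ≤ (C : ℝ≥0∞) := by
    rw [hC, ENNReal.coe_add, ENNReal.coe_toNNReal hKtop]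
    exact le_self_add
  have hC0 : (C : ℝ≥0∞) ≠ 0 := by exact_mod_cast hCpos.ne'
  have hCtop : (C : ℝ≥0∞) ≠ ⊤ := ENNReal.coe_ne_top
  refine ⟨C, hCpos, fun N => ?_⟩
  -- The tail integral bound
  have hset : MeasurableSet {x | C ≤ ‖f N x‖₊} :=
    measurableSet_le measurable_const (hfm N).nnnorm
  rw [eLpNorm_one_eq_lintegral_enorm]
  have heq : ∀ x, (‖({x | C ≤ ‖f N x‖₊}.indicator (f N)) x‖₊ : ℝ≥0∞)
      = {x | C ≤ ‖f N x‖₊}.indicator (fun x => (‖f N x‖₊ : ℝ≥0∞)) x := by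
    intro x
    by_cases hx : x ∈ {x | C ≤ ‖f N x‖₊} <;>
      simp [Set.indicator_of_mem, Set.indicator_of_notMem, hx]
  calc ∫⁻ x, (‖({x | C ≤ ‖f N x‖₊}.indicator (f N)) x‖₊ : ℝ≥0∞) ∂μ
      = ∫⁻ x in {x | C ≤ ‖f N x‖₊}, (‖f N x‖₊ : ℝ≥0∞) ∂μ := by
        simp_rw [heq]; exact lintegral_indicator hset _
    _ ≤ ∫⁻ x in {x | C ≤ ‖f N x‖₊}, (C : ℝ≥0∞) ^ (1 - p) * (‖f N x‖₊ : ℝ≥0∞) ^ p ∂μ := by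
        refine setLIntegral_mono ((measurable_const.mul
          (((hfm N).nnnorm.coe_nnreal_ennreal).pow_const p))) (fun x hx => ?_)
        have hx' : (C : ℝ≥0∞) ≤ (‖f N x‖₊ : ℝ≥0∞) := by exact_mod_cast hx
        have ha0 : ((‖f N x‖₊ : ℝ≥0∞)) ≠ 0 :=
          (lt_of_lt_of_le (ENNReal.coe_pos.2 hCpos) hx').ne'
        have hatop : ((‖f N x‖₊ : ℝ≥0∞)) ≠ ⊤ := ENNReal.coe_ne_top
        have : (‖f N x‖₊ : ℝ≥0∞) = (‖f N x‖₊ : ℝ≥0∞) ^ (1 - p) * (‖f N x‖₊ : ℝ≥0∞) ^ p := by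
          rw [← ENNReal.rpow_add _ _ ha0 hatop]
          norm_num
        have hmono : ((‖f N x‖₊ : ℝ≥0∞)) ^ (1 - p) ≤ (C : ℝ≥0∞) ^ (1 - p) := by
          rw [show (1 - p) = -(p-1) by ring, ENNReal.rpow_neg, ENNReal.rpow_neg]
          exact ENNReal.inv_le_inv.2 (ENNReal.rpow_le_rpow hx' (by linarith))
        calc (‖f N x‖₊ : ℝ≥0∞) = (‖f N x‖₊ : ℝ≥0∞) ^ (1 - p) * (‖f N x‖₊ : ℝ≥0∞) ^ p := this
          _ ≤ (C : ℝ≥0∞) ^ (1 - p) * (‖f N x‖₊ : ℝ≥0∞) ^ p := mul_le_mul_left hmono _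
    _ ≤ (C : ℝ≥0∞) ^ (1 - p) * ∫⁻ x, (‖f N x‖₊ : ℝ≥0∞) ^ p ∂μ := by
        rw [lintegral_const_mul _ (((hfm N).nnnorm.coe_nnreal_ennreal).pow_const p)]
        gcongr
        exact Measure.restrict_le_self
    _ ≤ (C : ℝ≥0∞) ^ (1 - p) * M ^ p := by
        gcongr
        have := hbound N
        rw [eLpNorm_eq_lintegral_rpow_enorm_toReal (by simp [hppos]) ENNReal.ofReal_ne_top,
          ENNReal.toReal_ofReal hppos.le] at this
        calc ∫⁻ x, (‖f N x‖₊ : ℝ≥0∞) ^ p ∂μ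
            = ((∫⁻ x, (‖f N x‖₊ : ℝ≥0∞) ^ p ∂μ) ^ (1/p)) ^ p := by
              rw [one_div, ENNReal.rpow_inv_rpow hppos.ne']
          _ ≤ M ^ p := ENNReal.rpow_le_rpow this hppos.le
    _ ≤ e := by
        -- C ^ (1-p) * M^p ≤ e
        have h1 : M ^ p ≤ e * (C : ℝ≥0∞) ^ (p - 1) := by
          have h2 : M ^ p / e ≤ (C : ℝ≥0∞) ^ (p - 1) := by
            calc M ^ p / e = K ^ (p - 1) := by
                  rw [hK, ENNReal.rpow_inv_rpow (by linarith : p - 1 ≠ 0)]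
              _ ≤ (C : ℝ≥0∞) ^ (p - 1) := ENNReal.rpow_le_rpow hCge (by linarith)
          calc M ^ p = e * (M ^ p / e) := (ENNReal.mul_div_cancel he0 hetop).symm
            _ ≤ e * (C : ℝ≥0∞) ^ (p - 1) := by gcongr
        calc (C : ℝ≥0∞) ^ (1 - p) * M ^ p
            ≤ (C : ℝ≥0∞) ^ (1 - p) * (e * (C : ℝ≥0∞) ^ (p - 1)) := by gcongr
          _ = e * ((C : ℝ≥0∞) ^ (1 - p) * (C : ℝ≥0∞) ^ (p - 1)) := by ring
          _ = e := by
              rw [← ENNReal.rpow_add _ _ hC0 hCtop]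
              norm_num

/-- Abstract quasi-invariance limit argument: if `(T_N)_* μ = f_N · μ` with `f_N`
uniformly bounded in `L^p(μ)`, `p > 1`, `f_N → f` a.e. and `T_N → T` a.e., then
`T_* μ = f · μ`; in particular if `f > 0` a.e. then `T_* μ` and `μ` are mutually
absolutely continuous. -/
theorem pushforward_density_limit {X : Type*} [MeasurableSpace X]
    [TopologicalSpace X] [PolishSpace X] [BorelSpace X]
    (μ : Measure X) [IsProbabilityMeasure μ]
    (T : ℕ → X → X) (Tlim : X → X)
    (hT : ∀ N, Measurable (T N)) (hTl : Measurable Tlim)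
    (hTconv : ∀ᵐ x ∂μ, Tendsto (fun N => T N x) atTop (nhds (Tlim x)))
    (p : ℝ) (hp : 1 < p)
    (f : ℕ → X → ℝ) (flim : X → ℝ)
    (hfm : ∀ N, Measurable (f N)) (hflm : Measurable flim)
    (hfnn : ∀ N x, 0 ≤ f N x)
    (hdens : ∀ N, Measure.map (T N) μ = μ.withDensity (fun x => ENNReal.ofReal (f N x)))
    (M : ℝ≥0∞) (hM : M ≠ ⊤)
    (hbound : ∀ N, eLpNorm (f N) (ENNReal.ofReal p) μ ≤ M)
    (hconv : ∀ᵐ x ∂μ, Tendsto (fun N => f N x) atTop (nhds (flim x))) :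
    Measure.map Tlim μ = μ.withDensity (fun x => ENNReal.ofReal (flim x)) ∧
    ((∀ᵐ x ∂μ, 0 < flim x) →
      (Measure.map Tlim μ ≪ μ ∧ μ ≪ Measure.map Tlim μ)) := by
  have hppos : (0:ℝ) < p := lt_trans one_pos hp
  have hq1 : (1 : ℝ≥0∞) ≤ ENNReal.ofReal p := by
    rw [← ENNReal.ofReal_one]; exact ENNReal.ofReal_le_ofReal hp.le
  -- flim is a.e. nonnegative
  have hflnn : ∀ᵐ x ∂μ, 0 ≤ flim x := by
    filter_upwards [hconv] with x hx
    exact ge_of_tendsto' hx (fun N => hfnn N x)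
  -- ℒp membership
  have hmemp : ∀ N, MemLp (f N) (ENNReal.ofReal p) μ := fun N =>
    ⟨(hfm N).aestronglyMeasurable, lt_of_le_of_lt (hbound N) hM.lt_top⟩
  have hflimp : MemLp flim (ENNReal.ofReal p) μ := by
    refine ⟨hflm.aestronglyMeasurable, ?_⟩
    calc eLpNorm flim (ENNReal.ofReal p) μ
        ≤ atTop.liminf (fun N => eLpNorm (f N) (ENNReal.ofReal p) μ) :=
          Lp.eLpNorm_lim_le_liminf_eLpNorm (fun N => (hfm N).aestronglyMeasurable) flim hconv
      _ ≤ M := by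
          refine liminf_le_of_le (by isBoundedDefault) ?_
          intro b hb
          obtain ⟨N, hN⟩ := hb.exists
          exact hN.trans (hbound N)
      _ < ⊤ := hM.lt_top
  have hmem1 : ∀ N, MemLp (f N) 1 μ := fun N => (hmemp N).mono_exponent hq1
  have hflim1 : MemLp flim 1 μ := hflimp.mono_exponent hq1
  have hint : ∀ N, Integrable (f N) μ := fun N => memLp_one_iff_integrable.1 (hmem1 N)
  have hintl : Integrable flim μ := memLp_one_iff_integrable.1 hflim1
  -- L¹ convergence via Vitali
  have hui : UnifIntegrable f 1 μ := aux_unifIntegrable μ p hp f hfm M hM hbound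
  have hL1 : Tendsto (fun N => eLpNorm (f N - flim) 1 μ) atTop (nhds 0) :=
    tendsto_Lp_finite_of_tendsto_ae_of_meas le_rfl ENNReal.one_ne_top
      (fun N => (hfm N).stronglyMeasurable) hflm.stronglyMeasurable hflim1 hui hconv
  -- main equality
  have key : Measure.map Tlim μ = μ.withDensity (fun x => ENNReal.ofReal (flim x)) := by
    haveI : IsProbabilityMeasure (Measure.map Tlim μ) :=
      Measure.isProbabilityMeasure_map hTl.aemeasurable
    refine ext_of_forall_lintegral_eq_of_IsFiniteMeasure (fun φ => ?_)
    set Cφ : ℝ≥0 := nndist φ 0 with hCφ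
    have hφb : ∀ x, φ x ≤ Cφ := fun x => BoundedContinuousFunction.NNReal.upper_bound φ x
    have hφrm : Measurable fun x => ((φ x : ℝ≥0) : ℝ) :=
      (NNReal.continuous_coe.comp φ.continuous).measurable
    have hφrb : ∀ x, ‖((φ x : ℝ≥0) : ℝ)‖ ≤ (Cφ : ℝ) := fun x => by
      rw [Real.norm_eq_abs, abs_of_nonneg (φ x).coe_nonneg]
      exact_mod_cast hφb x
    have hφm : Measurable fun x => ((φ x : ℝ≥0) : ℝ≥0∞) :=
      measurable_coe_nnreal_ennreal.comp φ.continuous.measurable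
    -- LHS limit
    have hLHS : Tendsto (fun N => ∫⁻ x, ((φ (T N x) : ℝ≥0) : ℝ≥0∞) ∂μ) atTop
        (nhds (∫⁻ x, ((φ (Tlim x) : ℝ≥0) : ℝ≥0∞) ∂μ)) := by
      refine tendsto_lintegral_of_dominated_convergence (fun _ => ((Cφ : ℝ≥0∞)))
        (fun N => hφm.comp (hT N)) (fun N => ?_) (by simp) ?_
      · filter_upwards with x
        exact_mod_cast hφb (T N x)
      · filter_upwards [hTconv] with x hx
        exact ENNReal.tendsto_coe.2 ((φ.continuous.tendsto _).comp hx)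
    -- identification of the N-th term
    have hid : ∀ N, (∫⁻ x, ((φ (T N x) : ℝ≥0) : ℝ≥0∞) ∂μ)
        = ENNReal.ofReal (∫ x, ((φ x : ℝ≥0) : ℝ) * f N x ∂μ) := by
      intro N
      have h1 : (∫⁻ x, ((φ (T N x) : ℝ≥0) : ℝ≥0∞) ∂μ)
          = ∫⁻ x, ((φ x : ℝ≥0) : ℝ≥0∞) ∂(Measure.map (T N) μ) :=
        (lintegral_map hφm (hT N)).symm
      rw [h1, hdens N, lintegral_withDensity_eq_lintegral_mul _
        ((hfm N).ennreal_ofReal) hφm]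
      rw [ofReal_integral_eq_lintegral_ofReal
        ((hint N).bdd_mul (c := (Cφ : ℝ)) hφrm.aestronglyMeasurable
          (Filter.Eventually.of_forall hφrb))
        (Filter.Eventually.of_forall fun x => mul_nonneg (φ x).coe_nonneg (hfnn N x))]
      congr 1 with x
      rw [ENNReal.ofReal_mul (φ x).coe_nonneg]
      simp [ENNReal.ofReal_coe_nnreal, mul_comm]
    -- RHS limit
    have hInt : Tendsto (fun N => ∫ x, ((φ x : ℝ≥0) : ℝ) * f N x ∂μ) atTop
        (nhds (∫ x, ((φ x : ℝ≥0) : ℝ) * flim x ∂μ)) := by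
      refine tendsto_integral_of_L1 _
        (hintl.bdd_mul (c := (Cφ : ℝ)) hφrm.aestronglyMeasurable
          (Filter.Eventually.of_forall hφrb)).aestronglyMeasurable
        (Filter.Eventually.of_forall fun N =>
          (hint N).bdd_mul (c := (Cφ : ℝ)) hφrm.aestronglyMeasurable
            (Filter.Eventually.of_forall hφrb)) ?_
      -- ∫⁻ ‖φ x * f N x - φ x * flim x‖₊ → 0
      have hb : ∀ N, (∫⁻ x, (‖((φ x : ℝ≥0) : ℝ) * f N x - ((φ x : ℝ≥0) : ℝ) * flim x‖₊ : ℝ≥0∞) ∂μ)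
          ≤ (Cφ : ℝ≥0∞) * eLpNorm (f N - flim) 1 μ := by
        intro N
        rw [eLpNorm_one_eq_lintegral_enorm]
        simp only [Pi.sub_apply]
        rw [← lintegral_const_mul _ (f := fun x => ‖f N x - flim x‖ₑ) ((hfm N).sub hflm).enorm]
        refine lintegral_mono fun x => ?_
        rw [← mul_sub]
        calc ((‖((φ x : ℝ≥0) : ℝ) * (f N x - flim x)‖₊ : ℝ≥0) : ℝ≥0∞)
            = ((‖((φ x : ℝ≥0) : ℝ)‖₊ : ℝ≥0∞)) * (‖f N x - flim x‖₊ : ℝ≥0∞) := by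
              rw [nnnorm_mul]; push_cast; ring
          _ ≤ (Cφ : ℝ≥0∞) * ((‖(f N  - flim) x‖₊ : ℝ≥0) : ℝ≥0∞) := by
              simp only [Pi.sub_apply]
              gcongr
              have : ‖((φ x : ℝ≥0) : ℝ)‖₊ = φ x := by
                ext; rw [coe_nnnorm, Real.norm_eq_abs, abs_of_nonneg (φ x).coe_nonneg]
              rw [this]
              exact_mod_cast hφb x
      have hb0 : Tendsto (fun N => (Cφ : ℝ≥0∞) * eLpNorm (f N - flim) 1 μ) atTop
          (nhds 0) := by
        have := ENNReal.Tendsto.const_mul (a := (Cφ : ℝ≥0∞)) hL1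
          (Or.inr ENNReal.coe_ne_top)
        simpa using this
      exact tendsto_of_tendsto_of_tendsto_of_le_of_le tendsto_const_nhds hb0
        (fun N => zero_le) hb
    -- combine
    have hRHS : Tendsto (fun N => ∫⁻ x, ((φ (T N x) : ℝ≥0) : ℝ≥0∞) ∂μ) atTop
        (nhds (ENNReal.ofReal (∫ x, ((φ x : ℝ≥0) : ℝ) * flim x ∂μ))) := by
      simp_rw [hid]
      exact (ENNReal.continuous_ofReal.tendsto _).comp hInt
    have hfin : (∫⁻ x, ((φ x : ℝ≥0) : ℝ≥0∞) ∂(Measure.map Tlim μ))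
        = ENNReal.ofReal (∫ x, ((φ x : ℝ≥0) : ℝ) * flim x ∂μ) := by
      rw [lintegral_map hφm hTl]
      exact tendsto_nhds_unique hLHS hRHS
    rw [hfin, lintegral_withDensity_eq_lintegral_mul _ hflm.ennreal_ofReal hφm]
    rw [ofReal_integral_eq_lintegral_ofReal
      (hintl.bdd_mul (c := (Cφ : ℝ)) hφrm.aestronglyMeasurable
        (Filter.Eventually.of_forall hφrb)) ?_]
    · congr 1 with x
      rw [ENNReal.ofReal_mul (φ x).coe_nonneg]
      simp [ENNReal.ofReal_coe_nnreal, mul_comm]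
    · filter_upwards [hflnn] with x hx
      exact mul_nonneg (φ x).coe_nonneg hx
  refine ⟨key, fun hpos => ⟨key ▸ withDensity_absolutelyContinuous μ _, ?_⟩⟩
  rw [key]
  refine withDensity_absolutelyContinuous' hflm.ennreal_ofReal.aemeasurable ?_
  filter_upwards [hpos] with x hx
  simp [ENNReal.ofReal_eq_zero, not_le, hx]
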